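/- arXiv:1509.08567 — 2 statements merged into one kernel-verified Lean document; each statement's English description precedes it below -/
import Mathlib

section
/- Let M be a metric space, f : M → M continuous with fixed point x_e, and let V : M → ℝ be continuous with V(x_e) = 0, V(x) > 0 for x ≠ x_e, satisfying α₁(d(x,x_e)) ≤ V(x) on a compact neighborhood K of x_e for a class-K function α₁, and suppose V(f(x)) - V(x) < 0 for all x ∈ K \ {x_e}, with f(K) ⊆ K. Then for every x₀ ∈ K, the orbit f^k(x₀) converges to x_e as k → ∞. -/
set_option maxHeartbeats 1000000


theorem stmt_1 {M : Type*} [MetricSpace M] (f : M → M) (hf : Continuous f)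
    (x_e : M) (hfix : f x_e = x_e)
    (V : M → ℝ) (hV : Continuous V) (hVe : V x_e = 0)
    (hVpos : ∀ x, x ≠ x_e → 0 < V x)
    (K : Set M) (hK : IsCompact K) (hKnbhd : K ∈ nhds x_e)
    (α₁ : ℝ → ℝ) (hα₁mono : StrictMonoOn α₁ (Set.Ici 0))
    (hα₁cont : ContinuousOn α₁ (Set.Ici 0)) (hα₁0 : α₁ 0 = 0)
    (hlow : ∀ x ∈ K, α₁ (dist x x_e) ≤ V x)
    (hdec : ∀ x ∈ K, x ≠ x_e → V (f x) - V x < 0)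
    (hinv : Set.MapsTo f K K) :
    ∀ x₀ ∈ K, Filter.Tendsto (fun k => f^[k] x₀) Filter.atTop (nhds x_e) := by
  intro x₀ hx₀
  set x : ℕ → M := fun k => f^[k] x₀ with hxdef
  have hxK : ∀ k, x k ∈ K := by
    intro k
    induction k with
    | zero => exact hx₀
    | succ n ih =>
      have : x (n + 1) = f (x n) := Function.iterate_succ_apply' f n x₀
      rw [this]; exact hinv ih
  have hxsucc : ∀ k, x (k + 1) = f (x k) := fun k =>
    Function.iterate_succ_apply' f k x₀
  have hV0 : ∀ y, 0 ≤ V y := by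
    intro y
    by_cases hy : y = x_e
    · simp [hy, hVe]
    · exact (hVpos y hy).le
  have hstep : ∀ y ∈ K, V (f y) ≤ V y := by
    intro y hy
    by_cases h : y = x_e
    · simp [h, hfix]
    · linarith [hdec y hy h]
  have hanti : Antitone (fun k => V (x k)) := by
    apply antitone_nat_of_succ_le
    intro n
    rw [hxsucc n]
    exact hstep (x n) (hxK n)
  have hbdd : BddBelow (Set.range fun k => V (x k)) :=
    ⟨0, by rintro _ ⟨k, rfl⟩; exact hV0 _⟩
  set c : ℝ := ⨅ k, V (x k) with hcdef
  have hc : Filter.Tendsto (fun k => V (x k)) Filter.atTop (nhds c) :=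
    tendsto_atTop_ciInf hanti hbdd
  apply Filter.tendsto_of_subseq_tendsto
  intro ns hns
  obtain ⟨y, hyK, ms, hms, hmy⟩ :=
    hK.tendsto_subseq (x := fun n => x (ns n)) (fun n => hxK (ns n))
  refine ⟨ms, ?_⟩
  -- the limit along this subsubsequence is y; show y = x_e
  have htop : Filter.Tendsto (fun n => ns (ms n)) Filter.atTop Filter.atTop :=
    hns.comp hms.tendsto_atTop
  have hVy : V y = c := by
    have h1 : Filter.Tendsto (fun n => V (x (ns (ms n)))) Filter.atTop (nhds (V y)) :=
      (hV.continuousAt.tendsto).comp hmy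
    have h2 : Filter.Tendsto (fun n => V (x (ns (ms n)))) Filter.atTop (nhds c) :=
      hc.comp htop
    exact tendsto_nhds_unique h1 h2
  have hVfy : V (f y) = c := by
    have h1 : Filter.Tendsto (fun n => V (x (ns (ms n) + 1))) Filter.atTop
        (nhds (V (f y))) := by
      have : Filter.Tendsto (fun n => x (ns (ms n) + 1)) Filter.atTop (nhds (f y)) := by
        have := (hf.continuousAt.tendsto).comp hmy
        simpa only [Function.comp_def, ← hxsucc] using this
      exact (hV.continuousAt.tendsto).comp this
    have htop1 : Filter.Tendsto (fun n => ns (ms n) + 1) Filter.atTop Filter.atTop :=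
      (Filter.tendsto_add_atTop_nat 1).comp htop
    have h2 : Filter.Tendsto (fun n => V (x (ns (ms n) + 1))) Filter.atTop (nhds c) :=
      hc.comp htop1
    exact tendsto_nhds_unique h1 h2
  have hy : y = x_e := by
    by_contra h
    have := hdec y hyK h
    rw [hVfy, hVy] at this
    linarith
  rw [hy] at hmy
  exact hmy
end

section
/- (Recursive feasibility of MPC.) Let f : M × U → M, let X, U_c, X_T be constraint sets with X_T ⊆ X, and let κ : M → U satisfy: for all x ∈ X_T, κ(x) ∈ U_c and f(x, κ(x)) ∈ X_T. Define D_N as the set of states x for which there exists a control sequence (u₀,…,u_{N-1}) ∈ U_c^N with all predicted states in X and the N-step predicted state in X_T. Then for any x ∈ D_N and any feasible sequence (u₀,…,u_{N-1}) for x, the successor state f(x, u₀) also lies in D_N; in particular D_N is forward invariant under the MPC feedback. -/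
/-- Predicted trajectory: `traj f x u k` is the state after `k` steps of
`x_{i+1} = f x_i u_i` starting from `x`. -/
def traj {M U : Type*} (f : M → U → M) (x : M) (u : ℕ → U) : ℕ → M
  | 0 => x
  | k + 1 => f (traj f x u k) (u k)

/-- Recursive feasibility of MPC. -/
theorem stmt_7 {M U : Type*} (f : M → U → M)
    (X : Set M) (Uc : Set U) (XT : Set M) (hXT : XT ⊆ X)
    (κ : M → U) (hκ : ∀ x ∈ XT, κ x ∈ Uc ∧ f x (κ x) ∈ XT)
    (N : ℕ) (hN : 0 < N)
    (DN : Set M)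
    (hDN : ∀ x, x ∈ DN ↔ ∃ u : ℕ → U,
      (∀ i < N, u i ∈ Uc) ∧ (∀ i < N, traj f x u i ∈ X) ∧ traj f x u N ∈ XT) :
    ∀ x ∈ DN, ∀ u : ℕ → U,
      ((∀ i < N, u i ∈ Uc) ∧ (∀ i < N, traj f x u i ∈ X) ∧ traj f x u N ∈ XT) →
      f x (u 0) ∈ DN := by
  intro x hx u ⟨hu, hX, hT⟩
  set xN := traj f x u N with hxN
  set v : ℕ → U := fun i => if i + 1 < N then u (i + 1) else κ xN with hv
  have key : ∀ k, k + 1 ≤ N → traj f (f x (u 0)) v k = traj f x u (k + 1) := by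
    intro k hk
    induction k with
    | zero => rfl
    | succ n ih =>
      have hn : n + 1 ≤ N := by omega
      simp only [traj, ih hn, hv]
      rw [if_pos (by omega)]
      exact congrArg (fun y => f y (u (n + 1))) (ih hn)
  rw [hDN]
  refine ⟨v, ?_, ?_, ?_⟩
  · intro i hi
    by_cases h : i + 1 < N
    · simpa [hv, h] using hu (i + 1) h
    · simpa [hv, h] using (hκ xN hT).1
  · intro i hi
    rw [key i (by omega)]
    by_cases h : i + 1 < N
    · exact hX (i + 1) h
    · have : i + 1 = N := by omega
      rw [this]; exact hXT hT
  · have : traj f (f x (u 0)) v N = f xN (κ xN) := by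
      have hN1 : N - 1 + 1 = N := by omega
      have := key (N - 1) (by omega)
      rw [hN1] at this
      calc traj f (f x (u 0)) v N = traj f (f x (u 0)) v (N - 1 + 1) := by rw [hN1]
        _ = f (traj f (f x (u 0)) v (N - 1)) (v (N - 1)) := rfl
        _ = f xN (κ xN) := by rw [this, hv]; simp [hN1]; rfl
    rw [this]
    exact (hκ xN hT).2
end
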